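/- arXiv:2505.00524 — 5 statements merged into one kernel-verified Lean document; each statement's English description precedes it below -/
import Mathlib

section
/- Let D be a nonempty set and let H and V be binary relations on D such that: (i) for every x ∈ D there exists y with H(x,y); (ii) for every x ∈ D there exists y with V(x,y); (iii) for all x, y ∈ D, (∃z, H(x,z) ∧ V(z,y)) holds if and only if (∃z, V(x,z) ∧ H(z,y)) holds. Then for every a ∈ D there exists a function g : ℕ × ℕ → D with g(0,0) = a such that H(g(i,j), g(i+1,j)) and V(g(i,j), g(i,j+1)) for all i, j ∈ ℕ. -/
private lemma dep_chain {α : Type} [Nonempty α] (Q : ℕ → α → Prop) (R : ℕ → α → α → Prop)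
    (h0 : ∃ x, Q 0 x) (hs : ∀ k x, Q k x → ∃ y, Q (k+1) y ∧ R k x y) :
    ∃ e : ℕ → α, (∀ k, Q k (e k)) ∧ (∀ k, R k (e k) (e (k+1))) := by
  classical
  obtain ⟨y0, hy0⟩ := h0
  have hs' : ∀ k x, ∃ y, Q k x → Q (k+1) y ∧ R k x y := by
    intro k x
    by_cases h : Q k x
    · obtain ⟨y, hy⟩ := hs k x h
      exact ⟨y, fun _ => hy⟩
    · exact ⟨Classical.arbitrary α, fun h' => absurd h' h⟩
  choose s hspec using hs'
  refine ⟨fun k => Nat.rec y0 (fun k x => s k x) k, ?_, ?_⟩ <;>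
  · have hQ : ∀ k, Q k (Nat.rec y0 (fun k x => s k x) k : α) := by
      intro k
      induction k with
      | zero => exact hy0
      | succ k ih => exact (hspec k _ ih).1
    intro k
    first
      | exact hQ k
      | exact (hspec k _ (hQ k)).2

private lemma ext_step {D : Type} [Nonempty D] (H V : D → D → Prop)
    (hH : ∀ x, ∃ y, H x y) (hV : ∀ x, ∃ y, V x y)
    (hconf : ∀ x y, (∃ z, H x z ∧ V z y) ↔ (∃ z, V x z ∧ H z y))
    (a : D) (n : ℕ) (f : ℕ × ℕ → D)
    (hf0 : f (0,0) = a)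
    (hfH : ∀ i j, i + 1 ≤ n → j ≤ n → H (f (i,j)) (f (i+1,j)))
    (hfV : ∀ i j, i ≤ n → j + 1 ≤ n → V (f (i,j)) (f (i,j+1))) :
    ∃ f' : ℕ × ℕ → D, f' (0,0) = a
      ∧ (∀ i j, i + 1 ≤ n+1 → j ≤ n+1 → H (f' (i,j)) (f' (i+1,j)))
      ∧ (∀ i j, i ≤ n+1 → j + 1 ≤ n+1 → V (f' (i,j)) (f' (i,j+1)))
      ∧ (∀ i j, i ≤ n → j ≤ n → f' (i,j) = f (i,j)) := by
  classical
  -- Column at i = n+1, built top-down (index k corresponds to j = n - k).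
  obtain ⟨e, heQ, heR⟩ := dep_chain
    (Q := fun k x => k ≤ n → H (f (n, n - k)) x)
    (R := fun k x y => k + 1 ≤ n → V y x)
    (by obtain ⟨y, hy⟩ := hH (f (n, n)); exact ⟨y, fun _ => by simpa using hy⟩)
    (by
      intro k x hx
      by_cases hk : k + 1 ≤ n
      · have hxH : H (f (n, n - k)) x := hx (by omega)
        have hVe : V (f (n, n - (k+1))) (f (n, n - k)) := by
          have := hfV n (n - (k+1)) le_rfl (by omega)
          have h1 : n - (k+1) + 1 = n - k := by omega
          rwa [h1] at this
        obtain ⟨z, hz1, hz2⟩ := (hconf (f (n, n - (k+1))) x).mpr ⟨f (n, n - k), hVe, hxH⟩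
        exact ⟨z, fun _ => hz1, fun _ => hz2⟩
      · exact ⟨Classical.arbitrary D, fun h => absurd h (by omega), fun h => absurd h hk⟩)
  set c : ℕ → D := fun j => e (n - j) with hc
  have hc1 : ∀ j, j ≤ n → H (f (n, j)) (c j) := by
    intro j hj
    have := heQ (n - j) (by omega)
    have h1 : n - (n - j) = j := by omega
    rwa [h1] at this
  have hc2 : ∀ j, j + 1 ≤ n → V (c j) (c (j+1)) := by
    intro j hj
    have := heR (n - (j+1)) (by omega)
    have h1 : n - (j+1) + 1 = n - j := by omega
    rw [h1] at this
    exact this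
  -- Row at j = n+1, built right-to-left (index k corresponds to i = n + 1 - k).
  set B : ℕ → D := fun k => if k = 0 then c n else f (n + 1 - k, n) with hB
  have hBH : ∀ k, k ≤ n → H (B (k+1)) (B k) := by
    intro k hk
    rcases Nat.eq_zero_or_pos k with rfl | hkpos
    · simpa [hB] using hc1 n le_rfl
    · have h1 : n + 1 - (k+1) = n - k := by omega
      have h2 : n - k + 1 = n + 1 - k := by omega
      have := hfH (n - k) n (by omega) le_rfl
      simp only [hB, if_neg (by omega : k + 1 ≠ 0), if_neg (by omega : k ≠ 0), h1]
      rwa [h2] at this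
  obtain ⟨e', he'Q, he'R⟩ := dep_chain
    (Q := fun k x => k ≤ n + 1 → V (B k) x)
    (R := fun k x y => k ≤ n → H y x)
    (by obtain ⟨y, hy⟩ := hV (B 0); exact ⟨y, fun _ => hy⟩)
    (by
      intro k x hx
      by_cases hk : k ≤ n
      · have hxV : V (B k) x := hx (by omega)
        obtain ⟨z, hz1, hz2⟩ := (hconf (B (k+1)) x).mp ⟨B k, hBH k hk, hxV⟩
        exact ⟨z, fun _ => hz1, fun _ => hz2⟩
      · exact ⟨Classical.arbitrary D, fun h => absurd h (by omega), fun h => absurd h hk⟩)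
  set r : ℕ → D := fun i => e' (n + 1 - i) with hr
  have hr1 : ∀ i, i ≤ n → V (f (i, n)) (r i) := by
    intro i hi
    have := he'Q (n + 1 - i) (by omega)
    have h0 : n + 1 - i ≠ 0 := by omega
    have h1 : n + 1 - (n + 1 - i) = i := by omega
    simp only [hB, if_neg h0, h1] at this
    exact this
  have hr2 : V (c n) (r (n+1)) := by
    have := he'Q 0 (by omega)
    simpa [hB, hr] using this
  have hr3 : ∀ i, i ≤ n → H (r i) (r (i+1)) := by
    intro i hi
    have := he'R (n - i) (by omega)
    have h1 : n - i + 1 = n + 1 - i := by omega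
    have h2 : n - i = n + 1 - (i + 1) := by omega
    rw [h1, h2] at this
    exact this
  refine ⟨fun p => if p.2 = n + 1 then r p.1 else if p.1 = n + 1 then c p.2 else f p,
    ?_, ?_, ?_, ?_⟩
  · show (if (0 : ℕ) = n + 1 then r 0 else if (0 : ℕ) = n + 1 then c 0 else f (0, 0)) = a
    rw [if_neg (by omega : ¬ (0 : ℕ) = n + 1), if_neg (by omega : ¬ (0 : ℕ) = n + 1)]
    exact hf0
  · intro i j hi hj
    simp only
    split_ifs <;>
      first
        | omega
        | exact hfH i j (by omega) (by omega)
        | exact hr3 i (by omega)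
        | (rw [show i = n by omega]; exact hc1 j (by omega))
  · intro i j hi hj
    simp only
    split_ifs <;>
      first
        | omega
        | exact hfV i j (by omega) (by omega)
        | exact hc2 j (by omega)
        | (rw [show j = n by omega]; exact hr1 i (by omega))
        | (rw [show j = n by omega, show i = n + 1 by omega]; exact hr2)
  · intro i j hi hj
    simp only [if_neg (by omega : ¬ j = n + 1), if_neg (by omega : ¬ i = n + 1)]

/-- If `H` and `V` are serial binary relations on a nonempty
set `D` satisfying the commuting-squares (confluence) condition
`(∃z, H x z ∧ V z y) ↔ (∃z, V x z ∧ H z y)`, then every `a ∈ D` is the seed of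
an `ℕ × ℕ` grid `g` with `H`-edges horizontally and `V`-edges vertically. -/
theorem stmt5 {D : Type} [Nonempty D] (H V : D → D → Prop)
    (hH : ∀ x, ∃ y, H x y) (hV : ∀ x, ∃ y, V x y)
    (hconf : ∀ x y, (∃ z, H x z ∧ V z y) ↔ (∃ z, V x z ∧ H z y)) :
    ∀ a : D, ∃ g : ℕ × ℕ → D, g (0, 0) = a ∧
      ∀ i j : ℕ, H (g (i, j)) (g (i + 1, j)) ∧ V (g (i, j)) (g (i, j + 1)) := by
  intro a
  classical
  obtain ⟨F, hFQ, hFR⟩ := dep_chain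
    (Q := fun n (f : ℕ × ℕ → D) => f (0,0) = a
      ∧ (∀ i j, i + 1 ≤ n → j ≤ n → H (f (i,j)) (f (i+1,j)))
      ∧ (∀ i j, i ≤ n → j + 1 ≤ n → V (f (i,j)) (f (i,j+1))))
    (R := fun n f f' => ∀ i j, i ≤ n → j ≤ n → f' (i,j) = f (i,j))
    (⟨fun _ => a, rfl, fun i j hi _ => absurd hi (by omega),
      fun i j _ hj => absurd hj (by omega)⟩)
    (by
      intro n f ⟨h0, h1, h2⟩
      obtain ⟨f', hf'0, hf'1, hf'2, hf'3⟩ := ext_step H V hH hV hconf a n f h0 h1 h2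
      exact ⟨f', ⟨hf'0, hf'1, hf'2⟩, fun i j hi hj => hf'3 i j hi hj⟩)
  have agree : ∀ d n i j, i ≤ n → j ≤ n → F (n + d) (i, j) = F n (i, j) := by
    intro d
    induction d with
    | zero => intro n i j _ _; rfl
    | succ d ih =>
      intro n i j hi hj
      have h1 : n + (d + 1) = (n + d) + 1 := by omega
      rw [h1, hFR (n + d) i j (by omega) (by omega)]
      exact ih n i j hi hj
  have agree' : ∀ m n i j, n ≤ m → i ≤ n → j ≤ n → F m (i, j) = F n (i, j) := by
    intro m n i j hnm hi hj
    have : m = n + (m - n) := by omega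
    rw [this]
    exact agree (m - n) n i j hi hj
  refine ⟨fun p => F (p.1 + p.2) p, ?_, ?_⟩
  · exact (hFQ 0).1
  · intro i j
    constructor
    · have hE := (hFQ (i + 1 + j)).2.1 i j (by omega) (by omega)
      have : F (i + 1 + j) (i, j) = F (i + j) (i, j) :=
        agree' (i + 1 + j) (i + j) i j (by omega) (by omega) (by omega)
      rwa [this] at hE
    · have hE := (hFQ (i + j + 1)).2.2 i j (by omega) (by omega)
      have : F (i + j + 1) (i, j) = F (i + j) (i, j) :=
        agree' (i + j + 1) (i + j) i j (by omega) (by omega) (by omega)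
      rwa [this] at hE
end

section
/- Let InfW be the modal formula □∃x ¬Q(x) ∧ □∀x (¬Q(x) → ◇Q(x)) ∧ □∀x (Q(x) → □Q(x)). If M = ⟨W, R, D, I⟩ is a predicate Kripke model with expanding domains whose accessibility relation R is reflexive and transitive, and M, w₀ ⊨ InfW for some w₀ ∈ W, then W is infinite. -/
/-- Let `M = ⟨W, R, D, I⟩` be a predicate Kripke model with
expanding domains, `R` reflexive and transitive, and `I` interpreting the
unary letter `Q` (with `I w ⊆ D w`).  If the formula
`InfW = □∃x ¬Q(x) ∧ □∀x (¬Q(x) → ◇Q(x)) ∧ □∀x (Q(x) → □Q(x))`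
is true at some world `w₀` (its three conjuncts being unfolded below), then
the set `W` of worlds is infinite. -/
theorem stmt12 {W 𝔇 : Type} (R : W → W → Prop)
    (hrefl : ∀ w, R w w) (htrans : ∀ u v w, R u v → R v w → R u w)
    (D : W → Set 𝔇) (hexp : ∀ u w, R u w → D u ⊆ D w)
    (hne : ∀ w, (D w).Nonempty)
    (I : W → Set 𝔇) (hI : ∀ w, I w ⊆ D w) (w₀ : W)
    -- `□∃x ¬Q(x)` at `w₀`:
    (h1 : ∀ v, R w₀ v → ∃ a ∈ D v, a ∉ I v)
    -- `□∀x (¬Q(x) → ◇Q(x))` at `w₀`: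
    (h2 : ∀ v, R w₀ v → ∀ a ∈ D v, a ∉ I v → ∃ u, R v u ∧ a ∈ I u)
    -- `□∀x (Q(x) → □Q(x))` at `w₀`:
    (h3 : ∀ v, R w₀ v → ∀ a ∈ D v, a ∈ I v → ∀ u, R v u → a ∈ I u) :
    Infinite W := by
  classical
  have step : ∀ p : {v : W // R w₀ v}, ∃ q : {v : W // R w₀ v},
      R p.1 q.1 ∧ ∃ a, a ∈ I q.1 ∧ a ∉ I p.1 := by
    rintro ⟨v, hv⟩
    obtain ⟨a, haD, haI⟩ := h1 v hv
    obtain ⟨u, hvu, haU⟩ := h2 v hv a haD haI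
    exact ⟨⟨u, htrans _ _ _ hv hvu⟩, hvu, a, haU, haI⟩
  choose g hg1 hg2 using step
  set f : ℕ → {v : W // R w₀ v} := fun n => g^[n] ⟨w₀, hrefl w₀⟩ with hf
  have hsucc : ∀ n, f (n + 1) = g (f n) := by
    intro n; simp [hf, Function.iterate_succ_apply']
  have hchain : ∀ m n, m ≤ n → R (f m).1 (f n).1 := by
    intro m n hmn
    induction n with
    | zero => simp_all [hrefl]
    | succ k ih =>
      rcases Nat.lt_or_ge m (k + 1) with h | h
      · exact htrans _ _ _ (ih (Nat.lt_succ_iff.mp h)) (hsucc k ▸ hg1 (f k))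
      · have : m = k + 1 := le_antisymm hmn h
        subst this; exact hrefl _
  have hinj : Function.Injective fun n => (f n).1 := by
    have key : ∀ m n, m < n → (f m).1 ≠ (f n).1 := by
      intro m n hmn h
      obtain ⟨a, haI, haN⟩ := hg2 (f m)
      have haI' : a ∈ I (f (m + 1)).1 := by rw [hsucc m]; exact haI
      have haIn : a ∈ I (f n).1 :=
        h3 (f (m + 1)).1 (f (m + 1)).2 a (hI _ haI') haI' (f n).1 (hchain _ _ hmn)
      rw [← h] at haIn
      exact haN haIn
    intro m n h
    rcases lt_trichotomy m n with hl | he | hl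
    · exact absurd h (key m n hl)
    · exact he
    · exact absurd h.symm (key n m hl)
  exact Infinite.of_injective _ hinj
end

section
/- There exists a predicate Kripke model M based on the frame ⟨ℕ, ≤⟩ with expanding finite local domains such that M, 0 ⊨ □∃x ¬Q(x) ∧ □∀x (¬Q(x) → ◇Q(x)) ∧ □∀x (Q(x) → □Q(x)). Concretely, taking D_k = {0, …, k} and declaring Q(m) true at world k iff m < k yields such a model. -/
/-- There is a predicate Kripke model based on the frame
`⟨ℕ, ≤⟩` with expanding *finite* local domains satisfying
`InfW = □∃x ¬Q(x) ∧ □∀x (¬Q(x) → ◇Q(x)) ∧ □∀x (Q(x) → □Q(x))` at the world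
`0`.  Concretely, the domains `D k = {0, …, k}` with `Q(m)` true at world `k`
iff `m < k` yield such a model. -/
theorem stmt13 :
    ∃ (D : ℕ → Set ℕ) (I : ℕ → Set ℕ),
      D = (fun k => {m : ℕ | m ≤ k}) ∧ I = (fun k => {m : ℕ | m < k}) ∧
      (∀ k, (D k).Finite) ∧ (∀ k, (D k).Nonempty) ∧
      (∀ k k' : ℕ, k ≤ k' → D k ⊆ D k') ∧ (∀ k, I k ⊆ D k) ∧
      -- `□∃x ¬Q(x)` at world `0` in the frame `⟨ℕ, ≤⟩`:
      (∀ v : ℕ, 0 ≤ v → ∃ a ∈ D v, a ∉ I v) ∧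
      -- `□∀x (¬Q(x) → ◇Q(x))` at world `0`:
      (∀ v : ℕ, 0 ≤ v → ∀ a ∈ D v, a ∉ I v → ∃ u, v ≤ u ∧ a ∈ I u) ∧
      -- `□∀x (Q(x) → □Q(x))` at world `0`:
      (∀ v : ℕ, 0 ≤ v → ∀ a ∈ D v, a ∈ I v → ∀ u, v ≤ u → a ∈ I u) := by
  refine ⟨_, _, rfl, rfl, ?_, ?_, ?_, ?_, ?_, ?_, ?_⟩
  · exact fun k => Set.finite_Iic k
  · exact fun k => ⟨0, Nat.zero_le k⟩
  · exact fun k k' h m hm => le_trans hm h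
  · intro k m hm; exact Nat.le_of_lt hm
  · exact fun v _ => ⟨v, le_refl v, lt_irrefl v⟩
  · intro v _ a ha _; exact ⟨v + 1, by omega, by simp only [Set.mem_setOf_eq] at ha ⊢; omega⟩
  · exact fun v _ a _ ha u hu => lt_of_lt_of_le ha hu
end

section
/- Let F = ⟨W, R⟩ be a finite Kripke frame, let P₁, …, Pₙ be unary predicate letters, and let φ be a modal predicate formula containing no predicate letters other than P₁, …, Pₙ. If φ is refuted at a world w₀ of some predicate Kripke model M = ⟨W, R, D, I⟩ with expanding domains based on F, then φ is refuted at w₀ in a model M' = ⟨W, R, D', I'⟩ based on F whose global domain has at most 2^{|W|·(n+1)} elements. -/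
/-- Modal predicate formulas over a signature of predicate letters `P` with
arities `ar`, with individual variables named by natural numbers. -/
inductive MForm (P : Type) (ar : P → ℕ) : Type
  | falsum : MForm P ar
  | atom (p : P) (ts : Fin (ar p) → ℕ) : MForm P ar
  | conj (φ ψ : MForm P ar) : MForm P ar
  | disj (φ ψ : MForm P ar) : MForm P ar
  | impl (φ ψ : MForm P ar) : MForm P ar
  | box (φ : MForm P ar) : MForm P ar
  | all (x : ℕ) (φ : MForm P ar) : MForm P ar
  | ex (x : ℕ) (φ : MForm P ar) : MForm P ar

/-- Truth in a predicate Kripke model with expanding domains. -/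
def MVal {P : Type} {ar : P → ℕ} {W 𝔇 : Type} (R : W → W → Prop)
    (D : W → Set 𝔇) (I : W → (p : P) → (Fin (ar p) → 𝔇) → Prop) :
    W → (ℕ → 𝔇) → MForm P ar → Prop
  | _, _, .falsum => False
  | w, g, .atom p ts => I w p fun i => g (ts i)
  | w, g, .conj φ ψ => MVal R D I w g φ ∧ MVal R D I w g ψ
  | w, g, .disj φ ψ => MVal R D I w g φ ∨ MVal R D I w g ψ
  | w, g, .impl φ ψ => MVal R D I w g φ → MVal R D I w g ψ
  | w, g, .box φ => ∀ v, R w v → MVal R D I v g φ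
  | w, g, .all x φ => ∀ a ∈ D w, MVal R D I w (Function.update g x a) φ
  | w, g, .ex x φ => ∃ a ∈ D w, MVal R D I w (Function.update g x a) φ

open Classical in
private noncomputable def stmt16q {n : ℕ} {W 𝔇 : Type} (D : W → Set 𝔇)
    (I : W → (p : Fin n) → (Fin 1 → 𝔇) → Prop) (a : 𝔇) :
    W → Bool × (Fin n → Bool) :=
  fun w => (decide (a ∈ D w), fun p => decide (I w p fun _ => a))

private theorem stmt16key {n : ℕ} {W 𝔇 : Type} (R : W → W → Prop)
    (D : W → Set 𝔇) (I : W → (p : Fin n) → (Fin 1 → 𝔇) → Prop)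
    (φ : MForm (Fin n) fun _ => 1) :
    ∀ (w : W) (g : ℕ → 𝔇),
      MVal R D I w g φ ↔
      MVal R (fun w => stmt16q D I '' D w)
        (fun w p f => ((f 0) w).2 p = true) w (fun x => stmt16q D I (g x)) φ := by
  classical
  induction φ with
  | falsum => intro w g; rfl
  | atom p ts =>
      intro w g
      simp only [MVal, stmt16q, decide_eq_true_eq]
      exact iff_of_eq (congrArg _ (funext fun i => by fin_cases i; rfl))
  | conj φ ψ ih1 ih2 => intro w g; exact and_congr (ih1 w g) (ih2 w g)
  | disj φ ψ ih1 ih2 => intro w g; exact or_congr (ih1 w g) (ih2 w g)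
  | impl φ ψ ih1 ih2 => intro w g; exact imp_congr (ih1 w g) (ih2 w g)
  | box φ ih =>
      intro w g
      exact forall_congr' fun v => forall_congr' fun _ => ih v g
  | all x φ ih =>
      intro w g
      have heq : ∀ a : 𝔇, (fun y => stmt16q D I (Function.update g x a y)) =
          Function.update (fun y => stmt16q D I (g y)) x (stmt16q D I a) := by
        intro a; funext y
        by_cases hy : y = x <;> simp [hy, Function.update]
      constructor
      · rintro H b ⟨a, ha, rfl⟩
        have := (ih w (Function.update g x a)).mp (H a ha)
        rwa [heq a] at this
      · intro H a ha
        refine (ih w (Function.update g x a)).mpr ?_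
        rw [heq a]
        exact H (stmt16q D I a) ⟨a, ha, rfl⟩
  | ex x φ ih =>
      intro w g
      have heq : ∀ a : 𝔇, (fun y => stmt16q D I (Function.update g x a y)) =
          Function.update (fun y => stmt16q D I (g y)) x (stmt16q D I a) := by
        intro a; funext y
        by_cases hy : y = x <;> simp [hy, Function.update]
      constructor
      · rintro ⟨a, ha, H⟩
        refine ⟨stmt16q D I a, ⟨a, ha, rfl⟩, ?_⟩
        rw [← heq a]
        exact (ih w (Function.update g x a)).mp H
      · rintro ⟨b, ⟨a, ha, rfl⟩, H⟩
        rw [← heq a] at H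
        exact ⟨a, ha, (ih w (Function.update g x a)).mpr H⟩

/-- Let `F = ⟨W, R⟩` be a finite Kripke frame and `φ` a
modal predicate formula whose predicate letters are among the unary letters
`P₁, …, Pₙ` (indexed by `Fin n`).  If `φ` is refuted at a world `w₀` of some
predicate Kripke model with expanding domains based on `F`, then `φ` is
refuted at `w₀` in such a model whose global domain (the union of the local
domains) has at most `2 ^ (|W| * (n + 1))` elements. -/
theorem stmt16 (n : ℕ) {W : Type} [Fintype W] (R : W → W → Prop)
    (φ : MForm (Fin n) fun _ => 1)
    {𝔇 : Type} (D : W → Set 𝔇) (hexp : ∀ u w, R u w → D u ⊆ D w)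
    (hne : ∀ w, (D w).Nonempty)
    (I : W → (p : Fin n) → (Fin 1 → 𝔇) → Prop)
    (w₀ : W) (g : ℕ → 𝔇) (hg : ∀ x, g x ∈ D w₀)
    (h : ¬ MVal R D I w₀ g φ) :
    ∃ (𝔇' : Type) (D' : W → Set 𝔇')
      (I' : W → (p : Fin n) → (Fin 1 → 𝔇') → Prop) (g' : ℕ → 𝔇'),
      (∀ u w, R u w → D' u ⊆ D' w) ∧ (∀ w, (D' w).Nonempty) ∧
      (⋃ w, D' w).Finite ∧ (⋃ w, D' w).ncard ≤ 2 ^ (Fintype.card W * (n + 1)) ∧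
      (∀ x, g' x ∈ D' w₀) ∧ ¬ MVal R D' I' w₀ g' φ := by
  classical
  refine ⟨W → Bool × (Fin n → Bool), fun w => stmt16q D I '' D w,
    fun w p f => ((f 0) w).2 p = true, fun x => stmt16q D I (g x),
    fun u w huw => Set.image_mono (hexp u w huw),
    fun w => (hne w).image _, Set.toFinite _, ?_,
    fun x => ⟨g x, hg x, rfl⟩, fun H => h ((stmt16key R D I φ w₀ g).mpr H)⟩
  calc (⋃ w, stmt16q D I '' D w).ncard
      ≤ (Set.univ : Set (W → Bool × (Fin n → Bool))).ncard :=
        Set.ncard_le_ncard (Set.subset_univ _) Set.finite_univ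
    _ = Fintype.card (W → Bool × (Fin n → Bool)) := by
        rw [Set.ncard_univ, Nat.card_eq_fintype_card]
    _ = 2 ^ (Fintype.card W * (n + 1)) := by
        rw [Fintype.card_fun, Fintype.card_prod, Fintype.card_bool,
          Fintype.card_fun, Fintype.card_bool, Fintype.card_fin,
          ← pow_succ', ← pow_mul, mul_comm]
end

section
/- Let φ be a modal predicate formula whose only predicate letter is a unary letter Q and whose individual variables are among {x, y}, and let ST(φ) be its standard translation into classical first-order logic over a single binary predicate P: ST(Q(v)) = P(v,z) for v ∈ {x,y}, ST commutes with ∧, ∨, →, ⊥ and with quantifiers over x and y, and ST(□ψ) = ∀z ST(ψ). Then φ is true in every predicate Kripke model with constant domains based on a frame ⟨W, W×W⟩ with universal accessibility relation if and only if ST(φ) is true in every classical first-order structure for the language {P}. -/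
/-- Modal formulas with a single unary predicate letter `Q` and individual
variables among `x, y` (represented by `Fin 2`). -/
inductive MF : Type
  | falsum : MF
  | atom (v : Fin 2) : MF            -- `Q(v)`
  | conj (φ ψ : MF) : MF
  | disj (φ ψ : MF) : MF
  | impl (φ ψ : MF) : MF
  | box (φ : MF) : MF
  | all (v : Fin 2) (φ : MF) : MF
  | ex (v : Fin 2) (φ : MF) : MF

/-- Classical first-order formulas with a single binary predicate letter `P`
and variables named by natural numbers (`0 = x`, `1 = y`, `2 = z`). -/
inductive CF : Type
  | falsum : CF
  | atom (a b : ℕ) : CF              -- `P(a, b)`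
  | conj (φ ψ : CF) : CF
  | disj (φ ψ : CF) : CF
  | impl (φ ψ : CF) : CF
  | all (x : ℕ) (φ : CF) : CF
  | ex (x : ℕ) (φ : CF) : CF

/-- The standard translation: `STr(Q(v)) = P(v, z)` (with `z` the variable `2`),
`STr` commutes with the connectives and with quantifiers over `x, y`, and
`STr(□ψ) = ∀z STr(ψ)`. -/
def STr : MF → CF
  | .falsum => .falsum
  | .atom v => .atom (v : ℕ) 2
  | .conj φ ψ => .conj (STr φ) (STr ψ)
  | .disj φ ψ => .disj (STr φ) (STr ψ)
  | .impl φ ψ => .impl (STr φ) (STr ψ)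
  | .box φ => .all 2 (STr φ)
  | .all v φ => .all (v : ℕ) (STr φ)
  | .ex v φ => .ex (v : ℕ) (STr φ)

/-- Tarskian truth of a classical formula in a structure `⟨A, Pr⟩` under an
assignment `g : ℕ → A`. -/
def CVal {A : Type} (Pr : A → A → Prop) : (ℕ → A) → CF → Prop
  | _, .falsum => False
  | g, .atom a b => Pr (g a) (g b)
  | g, .conj φ ψ => CVal Pr g φ ∧ CVal Pr g ψ
  | g, .disj φ ψ => CVal Pr g φ ∨ CVal Pr g ψ
  | g, .impl φ ψ => CVal Pr g φ → CVal Pr g ψ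
  | g, .all x φ => ∀ c : A, CVal Pr (Function.update g x c) φ
  | g, .ex x φ => ∃ c : A, CVal Pr (Function.update g x c) φ

/-- Truth of a modal formula in a predicate Kripke model with constant domain
`D`, based on the frame `⟨W, W × W⟩` with the universal accessibility
relation (so `□ψ` is true at `w` iff `ψ` is true at every world). -/
def MValS5 {W D : Type} (I : W → D → Prop) : W → (Fin 2 → D) → MF → Prop
  | _, _, .falsum => False
  | w, g, .atom v => I w (g v)
  | w, g, .conj φ ψ => MValS5 I w g φ ∧ MValS5 I w g ψ
  | w, g, .disj φ ψ => MValS5 I w g φ ∨ MValS5 I w g ψ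
  | w, g, .impl φ ψ => MValS5 I w g φ → MValS5 I w g ψ
  | _, g, .box φ => ∀ v : W, MValS5 I v g φ
  | w, g, .all v φ => ∀ a : D, MValS5 I w (Function.update g v a) φ
  | w, g, .ex v φ => ∃ a : D, MValS5 I w (Function.update g v a) φ

lemma key {A W D : Type} (I : W → D → Prop) (fD : A → D) (fW : A → W)
    (hD : Function.Surjective fD) (hW : Function.Surjective fW) (φ : MF) :
    ∀ G : ℕ → A, CVal (fun a b => I (fW b) (fD a)) G (STr φ) ↔
      MValS5 I (fW (G 2)) (fun v : Fin 2 => fD (G v)) φ := by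
  have hupd : ∀ (G : ℕ → A) (v : Fin 2) (c : A),
      (fun u : Fin 2 => fD (Function.update G (v : ℕ) c u)) =
        Function.update (fun u : Fin 2 => fD (G u)) v (fD c) := by
    intro G v c
    funext u
    by_cases h : u = v
    · subst h; simp
    · rw [Function.update_of_ne (fun hc => h (Fin.val_injective hc)),
        Function.update_of_ne h]
  have h2 : ∀ (G : ℕ → A) (v : Fin 2) (c : A),
      Function.update G (v : ℕ) c 2 = G 2 := by
    intro G v c
    exact Function.update_of_ne (by have := v.isLt; omega) _ _
  have h3 : ∀ (G : ℕ → A) (c : A),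
      (fun u : Fin 2 => fD (Function.update G 2 c u)) = fun u : Fin 2 => fD (G u) := by
    intro G c
    funext u
    rw [Function.update_of_ne (by have := u.isLt; omega)]
  induction φ with
  | falsum => intro G; exact Iff.rfl
  | atom v => intro G; exact Iff.rfl
  | conj φ ψ ihφ ihψ => intro G; exact and_congr (ihφ G) (ihψ G)
  | disj φ ψ ihφ ihψ => intro G; exact or_congr (ihφ G) (ihψ G)
  | impl φ ψ ihφ ihψ => intro G; exact imp_congr (ihφ G) (ihψ G)
  | box φ ih =>
    intro G
    show (∀ c : A, CVal _ (Function.update G 2 c) (STr φ)) ↔ _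
    constructor
    · intro h z
      obtain ⟨c, rfl⟩ := hW z
      have := (ih (Function.update G 2 c)).1 (h c)
      rwa [Function.update_self, h3] at this
    · intro h c
      refine (ih (Function.update G 2 c)).2 ?_
      rw [Function.update_self, h3]
      exact h (fW c)
  | all v φ ih =>
    intro G
    show (∀ c : A, CVal _ (Function.update G (v : ℕ) c) (STr φ)) ↔
      (∀ a : D, MValS5 I (fW (G 2)) (Function.update (fun u : Fin 2 => fD (G u)) v a) φ)
    constructor
    · intro h a
      obtain ⟨c, rfl⟩ := hD a
      have := (ih (Function.update G (v : ℕ) c)).1 (h c)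
      rwa [h2, hupd] at this
    · intro h c
      refine (ih (Function.update G (v : ℕ) c)).2 ?_
      rw [h2, hupd]
      exact h (fD c)
  | ex v φ ih =>
    intro G
    show (∃ c : A, CVal _ (Function.update G (v : ℕ) c) (STr φ)) ↔
      (∃ a : D, MValS5 I (fW (G 2)) (Function.update (fun u : Fin 2 => fD (G u)) v a) φ)
    constructor
    · rintro ⟨c, hc⟩
      refine ⟨fD c, ?_⟩
      have := (ih (Function.update G (v : ℕ) c)).1 hc
      rwa [h2, hupd] at this
    · rintro ⟨a, ha⟩
      obtain ⟨c, rfl⟩ := hD a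
      refine ⟨c, (ih (Function.update G (v : ℕ) c)).2 ?_⟩
      rw [h2, hupd]
      exact ha

/-- A modal formula `φ` with a single unary letter `Q` and
variables among `{x, y}` is true in every predicate Kripke model with constant
domains based on a frame with universal accessibility relation if and only if
its standard translation `STr(φ)` is true in every classical first-order
structure for the language of one binary predicate `P`. -/
theorem stmt17 (φ : MF) :
    (∀ (W D : Type), Nonempty W → Nonempty D →
        ∀ (I : W → D → Prop) (w : W) (g : Fin 2 → D), MValS5 I w g φ) ↔
      (∀ (A : Type), Nonempty A →
        ∀ (Pr : A → A → Prop) (g : ℕ → A), CVal Pr g (STr φ)) := by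
  constructor
  · intro h A hA Pr g
    exact (key (fun z a => Pr a z) id id Function.surjective_id
      Function.surjective_id φ g).2 (h A A hA hA _ _ _)
  · intro h W D hW hD I w g
    obtain ⟨w0⟩ := hW
    obtain ⟨d0⟩ := hD
    set G : ℕ → D × W := fun n => (g (if n = 1 then 1 else 0), w) with hG
    have hsD : Function.Surjective (Prod.fst : D × W → D) := fun d => ⟨(d, w0), rfl⟩
    have hsW : Function.Surjective (Prod.snd : D × W → W) := fun z => ⟨(d0, z), rfl⟩
    have := (key I Prod.fst Prod.snd hsD hsW φ G).1
      (h (D × W) ⟨(d0, w0)⟩ (fun a b => I b.2 a.1) G)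
    have hg : (fun v : Fin 2 => (G (v : ℕ)).1) = g := by
      funext v; fin_cases v <;> rfl
    rwa [hg] at this
end
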